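/- Let 𝔛 = (ℚ, τ) be the neighborhood frame on the rational numbers where τ(x) is the punctured neighborhood filter of x in the standard (order) topology on ℚ, i.e., τ(x) = {U : there is an open V containing x with V \ {x} ⊆ U}. Then the bimodal logic of the product 2-frame 𝔛 × 𝔛 equals the fusion D4 ⊗ D4. -/

import Mathlib

set_option autoImplicit false

/-- Modal formulas with `n` modalities (propositional letters indexed by `ℕ`). -/
inductive MFormula (n : ℕ) : Type
  | prop : ℕ → MFormula n
  | bot  : MFormula n
  | imp  : MFormula n → MFormula n → MFormula n
  | box  : Fin n → MFormula n → MFormula n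

namespace MFormula

/-- Negation as an abbreviation: ¬φ := φ → ⊥. -/
def neg {n : ℕ} (φ : MFormula n) : MFormula n := φ.imp .bot

/-- Uniform substitution of formulas for propositional letters. -/
def subst {n : ℕ} (s : ℕ → MFormula n) : MFormula n → MFormula n
  | prop p  => s p
  | bot     => bot
  | imp φ ψ => imp (φ.subst s) (ψ.subst s)
  | box i φ => box i (φ.subst s)

end MFormula

/-- A classical tautology: true under every boolean valuation of formulas
(a valuation respecting `⊥` and `→`, arbitrary on letters and boxed formulas). -/
def IsTautology {n : ℕ} (φ : MFormula n) : Prop :=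
  ∀ v : MFormula n → Prop,
    ¬ v .bot → (∀ ψ χ : MFormula n, v (ψ.imp χ) ↔ (v ψ → v χ)) → v φ

/-- Normal modal logics with `n` modalities. -/
structure IsNormalLogic {n : ℕ} (L : Set (MFormula n)) : Prop where
  taut : ∀ φ : MFormula n, IsTautology φ → φ ∈ L
  kax : ∀ (i : Fin n) (p q : MFormula n),
    ((MFormula.box i (p.imp q)).imp ((MFormula.box i p).imp (MFormula.box i q))) ∈ L
  mp : ∀ φ ψ : MFormula n, φ.imp ψ ∈ L → φ ∈ L → ψ ∈ L
  subst : ∀ (φ : MFormula n) (s : ℕ → MFormula n), φ ∈ L → φ.subst s ∈ L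
  nec : ∀ (i : Fin n) (φ : MFormula n), φ ∈ L → MFormula.box i φ ∈ L

/-- The smallest normal logic containing `Γ`. -/
def NormalClosure {n : ℕ} (Γ : Set (MFormula n)) : Set (MFormula n) :=
  ⋂₀ {L : Set (MFormula n) | IsNormalLogic L ∧ Γ ⊆ L}

/-- The axiom □p → ¬□¬p. -/
def dAx : MFormula 1 :=
  (MFormula.box 0 (.prop 0)).imp (MFormula.neg (MFormula.box 0 (MFormula.neg (.prop 0))))

/-- The axiom □p → p. -/
def tAx : MFormula 1 := (MFormula.box 0 (.prop 0)).imp (.prop 0)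

/-- The axiom □p → □□p. -/
def fourAx : MFormula 1 :=
  (MFormula.box 0 (.prop 0)).imp (MFormula.box 0 (MFormula.box 0 (.prop 0)))

def LogicK : Set (MFormula 1) := NormalClosure ∅
def LogicD : Set (MFormula 1) := NormalClosure (LogicK ∪ {dAx})
def LogicT : Set (MFormula 1) := NormalClosure (LogicK ∪ {tAx})
def LogicD4 : Set (MFormula 1) := NormalClosure (LogicD ∪ {fourAx})
def LogicS4 : Set (MFormula 1) := NormalClosure (LogicT ∪ {fourAx})

/-- Translation of a unimodal formula into the bimodal language, replacing □ by □_i. -/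
def trTo (i : Fin 2) : MFormula 1 → MFormula 2
  | .prop p  => .prop p
  | .bot     => .bot
  | .imp φ ψ => .imp (trTo i φ) (trTo i ψ)
  | .box _ φ => .box i (trTo i φ)

/-- The fusion `L₁ ⊗ L₂` of two unimodal logics: the smallest bimodal normal logic
containing the translation of `L₁` (□ ↦ □₁) and of `L₂` (□ ↦ □₂). -/
def Fusion (L₁ L₂ : Set (MFormula 1)) : Set (MFormula 2) :=
  NormalClosure (trTo 0 '' L₁ ∪ trTo 1 '' L₂)

/-- Truth in a Kripke model. -/
def kSat {n : ℕ} {W : Type} (R : Fin n → W → W → Prop) (V : ℕ → Set W) :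
    W → MFormula n → Prop
  | w, .prop p  => w ∈ V p
  | _, .bot     => False
  | w, .imp φ ψ => kSat R V w φ → kSat R V w ψ
  | w, .box i φ => ∀ v : W, R i w v → kSat R V v φ

/-- The logic of a Kripke `n`-frame. -/
def KLogn {n : ℕ} {W : Type} [Nonempty W] (R : Fin n → W → W → Prop) :
    Set (MFormula n) :=
  {φ | ∀ (V : ℕ → Set W) (w : W), kSat R V w φ}

/-- The logic of a unimodal Kripke frame. -/
def KLog {W : Type} [Nonempty W] (R : W → W → Prop) : Set (MFormula 1) :=
  KLogn (fun _ => R)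

/-- The logic of a bimodal Kripke frame. -/
def KLog2 {W : Type} [Nonempty W] (R₁ R₂ : W → W → Prop) : Set (MFormula 2) :=
  KLogn ![R₁, R₂]

/-- Truth in a (monotone) neighborhood model: `x ⊨ □_i φ` iff the truth set of `φ`
belongs to the filter `τ i x`. -/
def nSat {n : ℕ} {X : Type} (τ : Fin n → X → Filter X) (V : ℕ → Set X) :
    X → MFormula n → Prop
  | x, .prop p  => x ∈ V p
  | _, .bot     => False
  | x, .imp φ ψ => nSat τ V x φ → nSat τ V x ψ
  | x, .box i φ => {y | nSat τ V y φ} ∈ τ i x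

/-- The logic of a neighborhood `n`-frame. -/
def NLogn {n : ℕ} {X : Type} [Nonempty X] (τ : Fin n → X → Filter X) :
    Set (MFormula n) :=
  {φ | ∀ (V : ℕ → Set X) (x : X), nSat τ V x φ}

/-- The logic of a unimodal neighborhood frame. -/
def NLog {X : Type} [Nonempty X] (τ : X → Filter X) : Set (MFormula 1) :=
  NLogn (fun _ => τ)

/-- The logic of a neighborhood 2-frame. -/
def NLog2 {X : Type} [Nonempty X] (τ₁ τ₂ : X → Filter X) : Set (MFormula 2) :=
  NLogn ![τ₁, τ₂]

/-- Validity of a unimodal formula in a neighborhood frame. -/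
def NValid {X : Type} (τ : X → Filter X) (φ : MFormula 1) : Prop :=
  ∀ (V : ℕ → Set X) (x : X), nSat (fun _ => τ) V x φ

/-- The neighborhood frame `N(F)` of a Kripke frame `F = (W, R)`:
`τ(w)` is the principal filter of `R(w)`. -/
def nOfK {W : Type} (R : W → W → Prop) (w : W) : Filter W :=
  Filter.principal {v | R w v}

/-- Bounded morphisms between neighborhood frames (with neighborhood functions
indexed by `ι`). -/
def IsNdMorphism {ι X Y : Type} (τ : ι → X → Filter X) (σ : ι → Y → Filter Y)
    (f : X → Y) : Prop :=
  Function.Surjective f ∧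
    ∀ (i : ι) (x : X),
      (∀ U ∈ τ i x, f '' U ∈ σ i (f x)) ∧
      (∀ V ∈ σ i (f x), ∃ U ∈ τ i x, f '' U ⊆ V)

/-- First neighborhood function of the product of two neighborhood frames:
`U ∈ τ'_1(x₁,x₂)` iff `∃ V ∈ τ₁ x₁, V × {x₂} ⊆ U`. -/
def prodTau1 {X₁ X₂ : Type} (τ₁ : X₁ → Filter X₁) (p : X₁ × X₂) :
    Filter (X₁ × X₂) :=
  (τ₁ p.1).map (fun x => (x, p.2))

/-- Second neighborhood function of the product of two neighborhood frames:
`U ∈ τ'_2(x₁,x₂)` iff `∃ V ∈ τ₂ x₂, {x₁} × V ⊆ U`. -/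
def prodTau2 {X₁ X₂ : Type} (τ₂ : X₂ → Filter X₂) (p : X₁ × X₂) :
    Filter (X₁ × X₂) :=
  (τ₂ p.2).map (fun y => (p.1, y))

/-- The successor relation on finite sequences: `a R b` iff `b = a·x` for some `x ∈ A`. -/
def sucRel (A : Type) (a b : List A) : Prop := ∃ x : A, b = a ++ [x]

/-- The four kinds of tree frames: irreflexive/reflexive, non-transitive/transitive. -/
inductive TreeKind : Type
  | inn  -- irreflexive non-transitive: F_in
  | rn   -- reflexive non-transitive: F_rn (reflexive closure)
  | itr  -- irreflexive transitive: F_it (transitive closure)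
  | rt   -- reflexive transitive: F_rt (reflexive-transitive closure)

/-- The relation of the tree frame `F_{ξη}[A]` on `A*`. -/
def treeRel (A : Type) : TreeKind → List A → List A → Prop
  | .inn => sucRel A
  | .rn  => fun a b => a = b ∨ sucRel A a b
  | .itr => Relation.TransGen (sucRel A)
  | .rt  => Relation.ReflTransGen (sucRel A)

/-- First relation of the product frame `F₁ ⊗ F₂` on `(A ⊔ B)*`:
`x R'_1 y` iff `y = x·z` for some `z ∈ A*` with `Λ R₁ z`. -/
def prodRel1 (A B : Type) (k : TreeKind) (x y : List (A ⊕ B)) : Prop :=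
  ∃ z : List A, treeRel A k [] z ∧ y = x ++ z.map Sum.inl

/-- Second relation of the product frame `F₁ ⊗ F₂` on `(A ⊔ B)*`. -/
def prodRel2 (A B : Type) (k : TreeKind) (x y : List (A ⊕ B)) : Prop :=
  ∃ z : List B, treeRel B k [] z ∧ y = x ++ z.map Sum.inr

/-- Pseudo-infinite sequences over `A ∪ {0}` (with `0` modelled by `none`, so
automatically `0 ∉ A`) that are eventually `0`. -/
def PSeq (A : Type) : Type :=
  {α : ℕ → Option A // ∃ N, ∀ k ≥ N, α k = none}

instance {A : Type} : Nonempty (PSeq A) := ⟨⟨fun _ => none, 0, fun _ _ => rfl⟩⟩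

/-- `st(α)`: the least `N` such that `α` has only zeros from position `N` on. -/
noncomputable def PSeq.st {A : Type} (α : PSeq A) : ℕ :=
  sInf {N | ∀ k ≥ N, α.1 k = none}

/-- `f_F(α)`: the finite sequence obtained from `α` by deleting all zeros. -/
noncomputable def PSeq.forget {A : Type} (α : PSeq A) : List A :=
  ((List.range α.st).map α.1).reduceOption

/-- The basic neighborhood `U_k(α)` of `α`, relative to the relation `R` on `A*`:
`{β ∈ X : α|_m = β|_m and f_F(α) R f_F(β)}` where `m = max(k, st(α))`. -/
def Unbhd {A : Type} (R : List A → List A → Prop) (k : ℕ) (α : PSeq A) :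
    Set (PSeq A) :=
  {β | (∀ i < max k α.st, α.1 i = β.1 i) ∧ R α.forget β.forget}

/-- The neighborhood function of `N_ω(F)`: `τ(α)` is the filter generated by the
base `{U_k(α) : k ∈ ℕ}`. -/
noncomputable def nOmega {A : Type} (R : List A → List A → Prop) (α : PSeq A) :
    Filter (PSeq A) :=
  ⨅ k : ℕ, Filter.principal (Unbhd R k α)

/-- The interleaving `x₁ y₁ x₂ y₂ …` of two pseudo-infinite sequences. -/
def interleave {A B : Type} (α : PSeq A) (β : PSeq B) : PSeq (A ⊕ B) :=
  ⟨fun n => if n % 2 = 0 then (α.1 (n / 2)).map Sum.inl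
            else (β.1 (n / 2)).map Sum.inr, by
    obtain ⟨N₁, h₁⟩ := α.2
    obtain ⟨N₂, h₂⟩ := β.2
    refine ⟨2 * max N₁ N₂, fun k hk => ?_⟩
    have hdiv : max N₁ N₂ ≤ k / 2 := by omega
    by_cases h : k % 2 = 0
    · simp [h, h₁ (k / 2) (le_trans (le_max_left _ _) hdiv)]
    · simp [h, h₂ (k / 2) (le_trans (le_max_right _ _) hdiv)]⟩

/-- The map `g`: delete all zeros from the interleaving of `α` and `β`. -/
noncomputable def gMap {A B : Type} (p : PSeq A × PSeq B) : List (A ⊕ B) :=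
  (interleave p.1 p.2).forget

-- ===== Module 1: provability =====
namespace KSFusion
open MFormula

inductive Prov {n : ℕ} (Γ : Set (MFormula n)) : MFormula n → Prop
  | taut (φ) : IsTautology φ → Prov Γ φ
  | ax {φ} : φ ∈ Γ → Prov Γ φ
  | kax (i p q) : Prov Γ ((MFormula.box i (p.imp q)).imp
      ((MFormula.box i p).imp (MFormula.box i q)))
  | mp {φ ψ} : Prov Γ (φ.imp ψ) → Prov Γ φ → Prov Γ ψ
  | subst {φ} (s) : Prov Γ φ → Prov Γ (φ.subst s)
  | nec (i) {φ} : Prov Γ φ → Prov Γ (MFormula.box i φ)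

variable {n : ℕ} {Γ : Set (MFormula n)}

lemma isNormal_prov : IsNormalLogic {φ | Prov Γ φ} where
  taut := fun φ h => Prov.taut φ h
  kax := fun i p q => Prov.kax i p q
  mp := fun _ _ h1 h2 => Prov.mp h1 h2
  subst := fun _ s h => Prov.subst s h
  nec := fun i _ h => Prov.nec i h

lemma normalClosure_eq_prov : NormalClosure Γ = {φ | Prov Γ φ} := by
  apply le_antisymm
  · intro φ hφ
    exact hφ _ ⟨isNormal_prov, fun ψ hψ => Prov.ax hψ⟩
  · intro φ hφ
    intro L hL
    induction hφ with
    | taut ψ h => exact hL.1.taut ψ h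
    | ax h => exact hL.2 h
    | kax i p q => exact hL.1.kax i p q
    | mp _ _ ih1 ih2 => exact hL.1.mp _ _ ih1 ih2
    | subst s _ ih => exact hL.1.subst _ s ih
    | nec i _ ih => exact hL.1.nec i _ ih

lemma mem_normalClosure_self {φ : MFormula n} (h : φ ∈ Γ) : φ ∈ NormalClosure Γ :=
  fun _ hL => hL.2 h

lemma normalClosure_min {L : Set (MFormula n)} (h1 : IsNormalLogic L) (h2 : Γ ⊆ L) :
    NormalClosure Γ ⊆ L := fun _ hφ => hφ L ⟨h1, h2⟩

-- propositional helpers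
lemma prov_mp2 {A B C : MFormula n} (hA : Prov Γ A) (hB : Prov Γ B)
    (h : IsTautology (A.imp (B.imp C))) : Prov Γ C :=
  Prov.mp (Prov.mp (Prov.taut _ h) hA) hB

lemma prov_mp1 {A C : MFormula n} (hA : Prov Γ A)
    (h : IsTautology (A.imp C)) : Prov Γ C :=
  Prov.mp (Prov.taut _ h) hA

def conjImp {n : ℕ} : List (MFormula n) → MFormula n → MFormula n
  | [], φ => φ
  | ψ :: l, φ => ψ.imp (conjImp l φ)

lemma v_conjImp (v : MFormula n → Prop)
    (hi : ∀ ψ χ : MFormula n, v (ψ.imp χ) ↔ (v ψ → v χ)) :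
    ∀ (l : List (MFormula n)) (φ : MFormula n),
      v (conjImp l φ) ↔ ((∀ ψ ∈ l, v ψ) → v φ) := by
  intro l
  induction l with
  | nil => intro φ; simp [conjImp]
  | cons ψ l ih => intro φ; simp [conjImp, hi, ih]

end KSFusion
namespace KSFusion
open MFormula
variable {n : ℕ} {Γ : Set (MFormula n)}

/-- `Ded Γ S φ`: φ is derivable from premises in `S` over the logic axiomatized by `Γ`. -/
def Ded (Γ : Set (MFormula n)) (S : Set (MFormula n)) (φ : MFormula n) : Prop :=
  ∃ l : List (MFormula n), (∀ χ ∈ l, χ ∈ S) ∧ Prov Γ (conjImp l φ)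

lemma ded_of_prov {S : Set (MFormula n)} {φ : MFormula n} (h : Prov Γ φ) : Ded Γ S φ :=
  ⟨[], by simp, h⟩

lemma ded_of_mem {S : Set (MFormula n)} {φ : MFormula n} (h : φ ∈ S) : Ded Γ S φ :=
  ⟨[φ], by simp [h], by
    apply Prov.taut
    intro v hb hi
    simp only [conjImp, hi]
    exact id⟩

lemma ded_mono {S T : Set (MFormula n)} {φ : MFormula n} (hST : S ⊆ T) (h : Ded Γ S φ) :
    Ded Γ T φ := by
  obtain ⟨l, h1, h2⟩ := h
  exact ⟨l, fun χ hχ => hST (h1 χ hχ), h2⟩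

/-- Combine two deductions along a tautological binary consequence. -/
lemma ded_mp2 {S : Set (MFormula n)} {A B C : MFormula n}
    (hA : Ded Γ S A) (hB : Ded Γ S B) (h : IsTautology (A.imp (B.imp C))) :
    Ded Γ S C := by
  obtain ⟨l1, hl1, hp1⟩ := hA
  obtain ⟨l2, hl2, hp2⟩ := hB
  refine ⟨l1 ++ l2, by intro χ hχ; rcases List.mem_append.1 hχ with h' | h'
                       exacts [hl1 χ h', hl2 χ h'], ?_⟩
  apply prov_mp2 hp1 hp2
  intro v hb hi
  have hT := h v hb hi
  rw [hi, hi] at hT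
  simp only [hi, v_conjImp v hi, List.mem_append]
  intro h1 h2 h3
  exact hT (h1 (fun ψ hψ => h3 ψ (Or.inl hψ))) (h2 (fun ψ hψ => h3 ψ (Or.inr hψ)))

lemma ded_mp1 {S : Set (MFormula n)} {A C : MFormula n}
    (hA : Ded Γ S A) (h : IsTautology (A.imp C)) : Ded Γ S C := by
  obtain ⟨l1, hl1, hp1⟩ := hA
  refine ⟨l1, hl1, ?_⟩
  apply prov_mp1 hp1
  intro v hb hi
  have hT := h v hb hi
  rw [hi] at hT
  simp only [hi, v_conjImp v hi]
  intro h1 h2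
  exact hT (h1 h2)

lemma ded_mp {S : Set (MFormula n)} {A B : MFormula n}
    (h1 : Ded Γ S (A.imp B)) (h2 : Ded Γ S A) : Ded Γ S B := by
  apply ded_mp2 h1 h2
  intro v hb hi
  simp only [hi]
  exact fun h h' => h h'

/-- The deduction theorem. -/
lemma ded_deduction {S : Set (MFormula n)} {ψ φ : MFormula n}
    (h : Ded Γ (insert ψ S) φ) : Ded Γ S (ψ.imp φ) := by
  obtain ⟨l, hl, hp⟩ := h
  induction l generalizing φ with
  | nil =>
    refine ⟨[], by simp, ?_⟩
    apply prov_mp1 hp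
    intro v hb hi
    simp only [hi, conjImp]
    exact fun h _ => h
  | cons χ l ih =>
    have hχ : χ ∈ insert ψ S := hl χ (by simp)
    -- from Prov (χ.imp (conjImp l φ)) get Prov (conjImp l (χ.imp φ))
    have hp' : Prov Γ (conjImp l (χ.imp φ)) := by
      apply prov_mp1 hp
      intro v hb hi
      simp only [hi, v_conjImp v hi, conjImp]
      tauto
    have ih' := ih (φ := χ.imp φ) (fun x hx => hl x (by simp [hx])) hp'
    rcases hχ with rfl | hχS
    · -- χ = ψ : contract
      apply ded_mp1 ih'
      intro v hb hi
      simp only [hi]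
      tauto
    · -- χ ∈ S
      obtain ⟨l', hl', hp''⟩ := ih'
      refine ⟨χ :: l', by intro x hx; rcases List.mem_cons.1 hx with rfl | h'
                          exacts [hχS, hl' x h'], ?_⟩
      apply prov_mp1 hp''
      intro v hb hi
      simp only [hi, conjImp, v_conjImp v hi]
      tauto

def Con (Γ : Set (MFormula n)) (S : Set (MFormula n)) : Prop := ¬ Ded Γ S .bot

lemma con_mono {S T : Set (MFormula n)} (hST : S ⊆ T) (h : Con Γ T) : Con Γ S :=
  fun hd => h (ded_mono hST hd)

/-- A maximal consistent set. -/
structure MCS (Γ : Set (MFormula n)) (w : Set (MFormula n)) : Prop where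
  con : Con Γ w
  max : ∀ φ : MFormula n, φ ∉ w → ¬ Con Γ (insert φ w)

lemma MCS.mem_of_ded {w : Set (MFormula n)} (hw : MCS Γ w) {φ : MFormula n}
    (h : Ded Γ w φ) : φ ∈ w := by
  by_contra hφ
  have h1 := hw.max φ hφ
  rw [Con, not_not] at h1
  have h2 : Ded Γ w (φ.imp .bot) := ded_deduction h1
  exact hw.con (ded_mp h2 h)

lemma MCS.mem_of_prov {w : Set (MFormula n)} (hw : MCS Γ w) {φ : MFormula n}
    (h : Prov Γ φ) : φ ∈ w := hw.mem_of_ded (ded_of_prov h)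

lemma MCS.bot_not_mem {w : Set (MFormula n)} (hw : MCS Γ w) : (MFormula.bot : MFormula n) ∉ w :=
  fun h => hw.con (ded_of_mem h)

lemma MCS.mp_mem {w : Set (MFormula n)} (hw : MCS Γ w) {φ ψ : MFormula n}
    (h1 : φ.imp ψ ∈ w) (h2 : φ ∈ w) : ψ ∈ w :=
  hw.mem_of_ded (ded_mp (ded_of_mem h1) (ded_of_mem h2))

lemma MCS.neg_mem_of_not_mem {w : Set (MFormula n)} (hw : MCS Γ w) {φ : MFormula n}
    (h : φ ∉ w) : φ.neg ∈ w := by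
  have h1 := hw.max φ h
  rw [Con, not_not] at h1
  exact hw.mem_of_ded (ded_deduction h1)

lemma MCS.not_mem_of_neg_mem {w : Set (MFormula n)} (hw : MCS Γ w) {φ : MFormula n}
    (h : φ.neg ∈ w) : φ ∉ w := by
  intro h2
  exact hw.bot_not_mem (hw.mp_mem h h2)

lemma MCS.imp_mem_iff {w : Set (MFormula n)} (hw : MCS Γ w) {φ ψ : MFormula n} :
    φ.imp ψ ∈ w ↔ (φ ∈ w → ψ ∈ w) := by
  constructor
  · exact fun h1 h2 => hw.mp_mem h1 h2
  · intro h
    by_cases hφ : φ ∈ w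
    · have hψ := h hφ
      apply hw.mem_of_ded
      apply ded_mp1 (ded_of_mem hψ)
      intro v hb hi; simp only [hi]; tauto
    · have := hw.neg_mem_of_not_mem hφ
      apply hw.mem_of_ded
      apply ded_mp1 (ded_of_mem this)
      intro v hb hi; simp only [MFormula.neg, hi]; tauto

/-- Lindenbaum's lemma. -/
lemma lindenbaum {S : Set (MFormula n)} (h : Con Γ S) :
    ∃ w : Set (MFormula n), S ⊆ w ∧ MCS Γ w := by
  have hub : ∀ c ⊆ {T : Set (MFormula n) | Con Γ T}, IsChain (· ⊆ ·) c → c.Nonempty →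
      ∃ ub ∈ {T : Set (MFormula n) | Con Γ T}, ∀ s ∈ c, s ⊆ ub := by
    intro c hc hchain hne
    refine ⟨⋃₀ c, ?_, fun s hs => Set.subset_sUnion_of_mem hs⟩
    intro ⟨l, hl, hp⟩
    have : ∃ t ∈ c, ∀ χ ∈ l, χ ∈ t := by
      clear hp
      induction l with
      | nil => obtain ⟨t, ht⟩ := hne; exact ⟨t, ht, by simp⟩
      | cons χ l ih =>
        obtain ⟨t, htc, hlt⟩ := ih (fun x hx => hl x (by simp [hx]))
        obtain ⟨u, huc, hχu⟩ := hl χ (by simp)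
        rcases hchain.total htc huc with h' | h'
        · exact ⟨u, huc, by
            intro x hx; rcases List.mem_cons.1 hx with rfl | hx'
            exacts [hχu, h' (hlt x hx')]⟩
        · exact ⟨t, htc, by
            intro x hx; rcases List.mem_cons.1 hx with rfl | hx'
            exacts [h' hχu, hlt x hx']⟩
    obtain ⟨t, htc, hlt⟩ := this
    exact hc htc ⟨l, hlt, hp⟩
  obtain ⟨w, hSw, hmax⟩ := zorn_subset_nonempty {T | Con Γ T} hub S h
  refine ⟨w, hSw, hmax.1, ?_⟩
  intro φ hφ hcon
  have hle := hmax.2 hcon (Set.subset_insert _ _)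
  exact hφ (hle (Set.mem_insert _ _))

end KSFusion
namespace KSFusion
open MFormula
variable {n : ℕ} {Γ : Set (MFormula n)}

def World (Γ : Set (MFormula n)) : Type := {w : Set (MFormula n) // MCS Γ w}

def Rc (i : Fin n) (w v : World Γ) : Prop := ∀ φ : MFormula n, .box i φ ∈ w.1 → φ ∈ v.1

lemma box_conjImp (i : Fin n) (l : List (MFormula n)) (φ : MFormula n) :
    Prov Γ ((MFormula.box i (conjImp l φ)).imp
      (conjImp (l.map (MFormula.box i)) (MFormula.box i φ))) := by
  induction l with
  | nil =>
    apply Prov.taut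
    intro v hb hi
    simp only [conjImp, List.map_nil, hi]
    exact id
  | cons χ l ih =>
    have hK := Prov.kax (Γ := Γ) i χ (conjImp l φ)
    refine prov_mp2 hK ih ?_
    intro v hb hi
    simp only [conjImp, List.map_cons, hi]
    tauto

lemma mem_box_of_conjImp {i : Fin n} {l : List (MFormula n)} {φ : MFormula n}
    {w : Set (MFormula n)} (hw : MCS Γ w)
    (hp : Prov Γ (conjImp l φ)) (hl : ∀ χ ∈ l, MFormula.box i χ ∈ w) :
    MFormula.box i φ ∈ w := by
  have h1 : Prov Γ (MFormula.box i (conjImp l φ)) := Prov.nec i hp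
  have h2 : Prov Γ (conjImp (l.map (MFormula.box i)) (MFormula.box i φ)) :=
    Prov.mp (box_conjImp i l φ) h1
  exact hw.mem_of_ded ⟨l.map (MFormula.box i), by
    intro χ hχ
    obtain ⟨ψ, hψ, rfl⟩ := List.mem_map.1 hχ
    exact hl ψ hψ, h2⟩

section Canonical

lemma rc_serial (hD : ∀ i : Fin n, Prov Γ ((MFormula.box i (MFormula.bot)).neg)) (i : Fin n) (w : World Γ) : ∃ v : World Γ, Rc i w v := by
  have hcon : Con Γ {φ | MFormula.box i φ ∈ w.1} := by
    rintro ⟨l, hl, hp⟩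
    have : MFormula.box i MFormula.bot ∈ w.1 := mem_box_of_conjImp w.2 hp hl
    exact w.2.not_mem_of_neg_mem (w.2.mem_of_prov (hD i)) this
  obtain ⟨w', hw1, hw2⟩ := lindenbaum hcon
  exact ⟨⟨w', hw2⟩, fun φ hφ => hw1 hφ⟩

lemma rc_exists {i : Fin n} {w : World Γ} {ψ : MFormula n}
    (h : MFormula.box i ψ ∉ w.1) : ∃ v : World Γ, Rc i w v ∧ ψ ∉ v.1 := by
  have hcon : Con Γ (insert ψ.neg {φ | MFormula.box i φ ∈ w.1}) := by
    intro hded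
    have h1 : Ded Γ {φ | MFormula.box i φ ∈ w.1} (ψ.neg.imp .bot) := ded_deduction hded
    obtain ⟨l, hl, hp⟩ := h1
    have hp' : Prov Γ (conjImp l ψ) := by
      apply prov_mp1 hp
      intro v hb hi
      simp only [v_conjImp v hi, MFormula.neg, hi]
      tauto
    exact h (mem_box_of_conjImp w.2 hp' hl)
  obtain ⟨w', hw1, hw2⟩ := lindenbaum hcon
  refine ⟨⟨w', hw2⟩, fun φ hφ => hw1 (Set.mem_insert_of_mem _ hφ), ?_⟩
  exact hw2.not_mem_of_neg_mem (hw1 (Set.mem_insert _ _))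

lemma rc_trans (h4 : ∀ (i : Fin n) (ψ : MFormula n),
    Prov Γ ((MFormula.box i ψ).imp (MFormula.box i (MFormula.box i ψ)))) {i : Fin n} {w v u : World Γ} (h1 : Rc i w v) (h2 : Rc i v u) :
    Rc i w u := by
  intro φ hφ
  have : MFormula.box i (MFormula.box i φ) ∈ w.1 :=
    w.2.mp_mem (w.2.mem_of_prov (h4 i φ)) hφ
  exact h2 φ (h1 _ this)

lemma rc_succ_exists (hD : ∀ i : Fin n, Prov Γ ((MFormula.box i (MFormula.bot)).neg)) (i : Fin n) (ψ : MFormula n) (w : World Γ) :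
    ∃ v : World Γ, Rc i w v ∧ (MFormula.box i ψ ∉ w.1 → ψ ∉ v.1) := by
  by_cases h : MFormula.box i ψ ∈ w.1
  · obtain ⟨v, hv⟩ := rc_serial hD i w
    exact ⟨v, hv, fun h' => absurd h h'⟩
  · obtain ⟨v, hv1, hv2⟩ := rc_exists h
    exact ⟨v, hv1, fun _ => hv2⟩

end Canonical
end KSFusion
namespace KSFusion
open MFormula

-- countability of bimodal formulas
private def enc : MFormula 2 → ℕ
  | .prop p => Nat.pair 0 p
  | .bot => Nat.pair 1 0
  | .imp a b => Nat.pair 2 (Nat.pair (enc a) (enc b))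
  | .box i a => Nat.pair 3 (Nat.pair i.val (enc a))

lemma enc_inj : Function.Injective enc := by
  intro a
  induction a with
  | prop p => intro b h; cases b <;> simp [enc, Nat.pair_eq_pair] at h; simp [h]
  | bot => intro b h; cases b <;> first | rfl | simp [enc, Nat.pair_eq_pair] at h
  | imp a1 a2 ih1 ih2 =>
    intro b h; cases b <;> simp [enc, Nat.pair_eq_pair] at h
    rw [ih1 h.1, ih2 h.2]
  | box i a ih =>
    intro b h; cases b <;> simp [enc, Nat.pair_eq_pair] at h
    rw [ih h.2, Fin.ext h.1]

instance : Countable (MFormula 2) := ⟨⟨enc, enc_inj⟩⟩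

instance : Nonempty (MFormula 2) := ⟨.bot⟩

lemma exists_enum : ∃ en : ℕ → MFormula 2, Function.Surjective en :=
  exists_surjective_nat (MFormula 2)

-- the tree frame
abbrev TW : Type := List (ℕ ⊕ ℕ)

def TR1 (x y : TW) : Prop := ∃ w : List ℕ, w ≠ [] ∧ y = x ++ w.map Sum.inl
def TR2 (x y : TW) : Prop := ∃ w : List ℕ, w ≠ [] ∧ y = x ++ w.map Sum.inr

def TRf : Fin 2 → TW → TW → Prop := ![TR1, TR2]

section Tree
variable {Γ : Set (MFormula 2)}
variable (hD : ∀ i : Fin 2, Prov Γ ((MFormula.box i (MFormula.bot)).neg))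
variable (en : ℕ → MFormula 2) (root : World Γ)

noncomputable def stepw (c : ℕ ⊕ ℕ) (w : World Γ) : World Γ :=
  match c with
  | .inl a => (rc_succ_exists hD 0 (en a) w).choose
  | .inr a => (rc_succ_exists hD 1 (en a) w).choose

lemma stepw_inl (a : ℕ) (w : World Γ) :
    Rc 0 w (stepw hD en (Sum.inl a) w) ∧
      (MFormula.box 0 (en a) ∉ w.1 → en a ∉ (stepw hD en (Sum.inl a) w).1) :=
  (rc_succ_exists hD 0 (en a) w).choose_spec

lemma stepw_inr (a : ℕ) (w : World Γ) :
    Rc 1 w (stepw hD en (Sum.inr a) w) ∧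
      (MFormula.box 1 (en a) ∉ w.1 → en a ∉ (stepw hD en (Sum.inr a) w).1) :=
  (rc_succ_exists hD 1 (en a) w).choose_spec

private noncomputable def labAux : List (ℕ ⊕ ℕ) → World Γ
  | [] => root
  | c :: t => stepw hD en c (labAux t)

noncomputable def lab (x : TW) : World Γ := labAux hD en root x.reverse

lemma lab_nil : lab hD en root [] = root := rfl

lemma lab_append (x : TW) (c : ℕ ⊕ ℕ) :
    lab hD en root (x ++ [c]) = stepw hD en c (lab hD en root x) := by
  simp [lab, List.reverse_append, labAux]

lemma rc_lab1 (h4 : ∀ (i : Fin 2) (ψ : MFormula 2),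
    Prov Γ ((MFormula.box i ψ).imp (MFormula.box i (MFormula.box i ψ)))) : ∀ (w : List ℕ), w ≠ [] → ∀ x : TW,
    Rc 0 (lab hD en root x) (lab hD en root (x ++ w.map Sum.inl)) := by
  intro w
  induction w with
  | nil => intro h; exact absurd rfl h
  | cons a w ih =>
    intro _ x
    have h1 : Rc (Γ := Γ) 0 (lab hD en root x) (lab hD en root (x ++ [Sum.inl a])) := by
      rw [lab_append]
      exact (stepw_inl hD en a _).1
    by_cases hw : w = []
    · subst hw; simpa using h1
    · have h2 := ih hw (x ++ [Sum.inl a])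
      have heq : (x ++ [Sum.inl a]) ++ w.map Sum.inl = x ++ (a :: w).map Sum.inl := by
        simp
      rw [heq] at h2
      exact rc_trans h4 h1 h2

lemma rc_lab2 (h4 : ∀ (i : Fin 2) (ψ : MFormula 2),
    Prov Γ ((MFormula.box i ψ).imp (MFormula.box i (MFormula.box i ψ)))) : ∀ (w : List ℕ), w ≠ [] → ∀ x : TW,
    Rc 1 (lab hD en root x) (lab hD en root (x ++ w.map Sum.inr)) := by
  intro w
  induction w with
  | nil => intro h; exact absurd rfl h
  | cons a w ih =>
    intro _ x
    have h1 : Rc (Γ := Γ) 1 (lab hD en root x) (lab hD en root (x ++ [Sum.inr a])) := by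
      rw [lab_append]
      exact (stepw_inr hD en a _).1
    by_cases hw : w = []
    · subst hw; simpa using h1
    · have h2 := ih hw (x ++ [Sum.inr a])
      have heq : (x ++ [Sum.inr a]) ++ w.map Sum.inr = x ++ (a :: w).map Sum.inr := by
        simp
      rw [heq] at h2
      exact rc_trans h4 h1 h2

/-- The valuation of the tree model. -/
def TV (hD : ∀ i : Fin 2, Prov Γ ((MFormula.box i (MFormula.bot)).neg)) (en : ℕ → MFormula 2)
    (root : World Γ) : ℕ → Set TW :=
  fun p => {x | MFormula.prop p ∈ (lab hD en root x).1}

/-- Truth lemma for the tree model. -/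
lemma tree_truth (h4 : ∀ (i : Fin 2) (ψ : MFormula 2),
    Prov Γ ((MFormula.box i ψ).imp (MFormula.box i (MFormula.box i ψ))))
    (hen : Function.Surjective en) :
    ∀ (φ : MFormula 2) (x : TW),
      kSat TRf (TV hD en root) x φ ↔ φ ∈ (lab hD en root x).1 := by
  intro φ
  induction φ with
  | prop p => intro x; simp [kSat, TV]
  | bot => intro x; simp [kSat]; exact fun h => (lab hD en root x).2.bot_not_mem h
  | imp φ ψ ihφ ihψ =>
    intro x
    simp only [kSat, ihφ, ihψ]
    exact ((lab hD en root x).2.imp_mem_iff).symm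
  | box i φ ih =>
    intro x
    fin_cases i
    · constructor
      · intro h
        by_contra hbox
        obtain ⟨a, rfl⟩ := hen φ
        have h2 := (stepw_inl hD en a (lab hD en root x)).2 hbox
        rw [← lab_append] at h2
        have h3 : TRf 0 x (x ++ [Sum.inl a]) := by
          show TR1 x (x ++ [Sum.inl a])
          exact ⟨[a], by simp, by simp⟩
        exact h2 ((ih _).1 (h _ h3))
      · intro h v hv
        have hv' : TR1 x v := hv
        obtain ⟨w, hw, rfl⟩ := hv'
        exact (ih _).2 (rc_lab1 hD en root h4 w hw x φ h)
    · constructor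
      · intro h
        by_contra hbox
        obtain ⟨a, rfl⟩ := hen φ
        have h2 := (stepw_inr hD en a (lab hD en root x)).2 hbox
        rw [← lab_append] at h2
        have h3 : TRf 1 x (x ++ [Sum.inr a]) := by
          show TR2 x (x ++ [Sum.inr a])
          exact ⟨[a], by simp, by simp⟩
        exact h2 ((ih _).1 (h _ h3))
      · intro h v hv
        have hv' : TR2 x v := hv
        obtain ⟨w, hw, rfl⟩ := hv'
        exact (ih _).2 (rc_lab2 hD en root h4 w hw x φ h)

end Tree
end KSFusion
namespace KSFusion

abbrev XS : Type := PSeq ℕ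

namespace XS

lemma ext' {α β : XS} (h : ∀ i, α.1 i = β.1 i) : α = β := Subtype.ext (funext h)

lemma st_spec (α : XS) : ∀ k ≥ α.st, α.1 k = none :=
  Nat.sInf_mem (s := {N | ∀ k ≥ N, α.1 k = none}) α.2

lemma st_le {α : XS} {N : ℕ} (h : ∀ k ≥ N, α.1 k = none) : α.st ≤ N :=
  Nat.sInf_le h

lemma lt_st {α : XS} {i : ℕ} (h : α.1 i ≠ none) : i < α.st := by
  by_contra h'
  exact h (st_spec α i (le_of_not_gt h'))

/-- The letter embedding into `ℤ`; `none ↦ 0`. -/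
def jmb : Option ℕ → ℤ
  | none => 0
  | some n => if n % 2 = 0 then ((n / 2 : ℕ) + 1 : ℤ) else -((n / 2 : ℕ) + 1 : ℤ)

lemma jmb_none : jmb none = 0 := rfl

lemma jmb_some (n : ℕ) :
    jmb (some n) = if n % 2 = 0 then ((n / 2 : ℕ) + 1 : ℤ) else -((n / 2 : ℕ) + 1 : ℤ) := rfl

lemma jmb_inj : Function.Injective jmb := by
  intro a b h
  cases a with
  | none => cases b with
    | none => rfl
    | some m =>
      exfalso
      rw [jmb_none, jmb_some] at h
      by_cases hm : m % 2 = 0 <;> simp [hm] at h <;> omega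
  | some n => cases b with
    | none =>
      exfalso
      rw [jmb_none, jmb_some] at h
      by_cases hn : n % 2 = 0 <;> simp [hn] at h <;> omega
    | some m =>
      rw [jmb_some, jmb_some] at h
      congr 1
      by_cases hn : n % 2 = 0 <;> by_cases hm : m % 2 = 0 <;> simp [hn, hm] at h <;> omega

/-- Lexicographic strict order. -/
def xlt (α β : XS) : Prop :=
  ∃ i : ℕ, (∀ k < i, α.1 k = β.1 k) ∧ jmb (α.1 i) < jmb (β.1 i)

lemma xlt_irrefl (α : XS) : ¬ xlt α α := by
  rintro ⟨i, _, h⟩; exact lt_irrefl _ h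

lemma xlt_trans {α β γ : XS} (h1 : xlt α β) (h2 : xlt β γ) : xlt α γ := by
  obtain ⟨i, hpre, hlt⟩ := h1
  obtain ⟨i', hpre', hlt'⟩ := h2
  rcases lt_trichotomy i i' with h | h | h
  · exact ⟨i, fun k hk => (hpre k hk).trans (hpre' k (hk.trans h)),
      by rw [← hpre' i h]; exact hlt⟩
  · subst h; exact ⟨i, fun k hk => (hpre k hk).trans (hpre' k hk), hlt.trans hlt'⟩
  · exact ⟨i', fun k hk => (hpre k (hk.trans h)).trans (hpre' k hk),
      by rw [hpre i' h]; exact hlt'⟩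

lemma xlt_trichotomy (α β : XS) : xlt α β ∨ α = β ∨ xlt β α := by
  by_cases h : α = β
  · exact Or.inr (Or.inl h)
  · have hne : {i | α.1 i ≠ β.1 i}.Nonempty := by
      by_contra h'
      refine h (ext' fun i => ?_)
      by_contra hi
      exact h' ⟨i, hi⟩
    set i0 := sInf {i | α.1 i ≠ β.1 i} with hi0
    have hmem : α.1 i0 ≠ β.1 i0 := Nat.sInf_mem hne
    have hpre : ∀ k < i0, α.1 k = β.1 k := by
      intro k hk
      by_contra hk'
      exact absurd hk (not_lt.2 (Nat.sInf_le hk'))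
    have : jmb (α.1 i0) ≠ jmb (β.1 i0) := fun hc => hmem (jmb_inj hc)
    rcases this.lt_or_gt with h' | h'
    · exact Or.inl ⟨i0, hpre, h'⟩
    · exact Or.inr (Or.inr ⟨i0, fun k hk => (hpre k hk).symm, h'⟩)

noncomputable instance : LinearOrder XS where
  le a b := xlt a b ∨ a = b
  lt := xlt
  le_refl a := Or.inr rfl
  le_trans a b c h1 h2 := by
    rcases h1 with h1 | rfl
    · rcases h2 with h2 | rfl
      · exact Or.inl (xlt_trans h1 h2)
      · exact Or.inl h1
    · exact h2
  le_antisymm a b h1 h2 := by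
    rcases h1 with h1 | rfl
    · rcases h2 with h2 | rfl
      · exact absurd (xlt_trans h1 h2) (xlt_irrefl _)
      · rfl
    · rfl
  le_total a b := by
    rcases xlt_trichotomy a b with h | h | h
    · exact Or.inl (Or.inl h)
    · exact Or.inl (Or.inr h)
    · exact Or.inr (Or.inl h)
  lt_iff_le_not_ge a b := by
    constructor
    · intro h
      refine ⟨Or.inl h, ?_⟩
      rintro (h' | rfl)
      · exact absurd (xlt_trans h h') (xlt_irrefl _)
      · exact xlt_irrefl _ h
    · rintro ⟨h1 | rfl, h2⟩
      · exact h1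
      · exact absurd (Or.inr rfl) h2
  toDecidableLE := fun _ _ => Classical.propDecidable _

lemma lt_iff_xlt {α β : XS} : α < β ↔ xlt α β := Iff.rfl

/-- Update a sequence at one position. -/
def updX (α : XS) (m : ℕ) (o : Option ℕ) : XS :=
  ⟨fun i => if i = m then o else α.1 i, by
    obtain ⟨N, hN⟩ := α.2
    refine ⟨max (m + 1) N, fun k hk => ?_⟩
    show (if k = m then o else α.1 k) = none
    rw [if_neg (by omega)]
    exact hN k (le_trans (le_max_right _ _) hk)⟩

lemma updX_lt {α : XS} {m : ℕ} (hm : α.st ≤ m) : updX α m (some 1) < α := by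
  rw [lt_iff_xlt]
  refine ⟨m, fun k hk => by simp [updX, Nat.ne_of_lt hk], ?_⟩
  rw [st_spec α m hm]
  simp [updX, jmb]

lemma lt_updX {α : XS} {m : ℕ} (hm : α.st ≤ m) : α < updX α m (some 0) := by
  rw [lt_iff_xlt]
  refine ⟨m, fun k hk => by simp [updX, Nat.ne_of_lt hk], ?_⟩
  rw [st_spec α m hm]
  simp [updX, jmb]

noncomputable instance : TopologicalSpace XS := Preorder.topology XS
instance : OrderTopology XS := ⟨rfl⟩

instance : NoMaxOrder XS :=
  ⟨fun α => ⟨updX α α.st (some 0), lt_updX le_rfl⟩⟩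

instance : NoMinOrder XS :=
  ⟨fun α => ⟨updX α α.st (some 1), updX_lt le_rfl⟩⟩

instance : DenselyOrdered XS := by
  constructor
  intro α β hαβ
  obtain ⟨i, hpre, hlt⟩ := lt_iff_xlt.1 hαβ
  refine ⟨updX α (max (i+1) α.st) (some 0), lt_updX (le_max_right _ _), ?_⟩
  rw [lt_iff_xlt]
  refine ⟨i, fun k hk => ?_, ?_⟩
  · show (if k = max (i+1) α.st then some 0 else α.1 k) = β.1 k
    rw [if_neg (by omega), hpre k hk]
  · show jmb (if i = max (i+1) α.st then some 0 else α.1 i) < jmb (β.1 i)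
    rw [if_neg (by omega)]
    exact hlt

instance : Countable XS := by
  have h : Function.Injective (fun α : XS => (List.range α.st).map α.1) := by
    intro α β h
    have hlen : α.st = β.st := by
      have := congrArg List.length h
      simpa using this
    apply ext'
    intro i
    by_cases hi : i < α.st
    · have h1 := congrArg (fun l => l[i]?) h
      simpa [List.getElem?_map, List.getElem?_range, hi, hlen ▸ hi] using h1
    · rw [st_spec α i (le_of_not_gt hi), st_spec β i (le_of_not_gt (hlen ▸ hi))]
  exact h.countable

/-- Cylinders. -/
def cyl (m : ℕ) (α : XS) : Set XS := {β | ∀ i < m, β.1 i = α.1 i}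

lemma self_mem_cyl (m : ℕ) (α : XS) : α ∈ cyl m α := fun _ _ => rfl

lemma cyl_mono {m m' : ℕ} (h : m ≤ m') (α : XS) : cyl m' α ⊆ cyl m α :=
  fun β hβ i hi => hβ i (lt_of_lt_of_le hi h)

lemma isOpen_cyl (m : ℕ) (α : XS) : IsOpen (cyl m α) := by
  rw [isOpen_iff_mem_nhds]
  intro β hβ
  rw [mem_nhds_iff_exists_Ioo_subset]
  set m' := max m β.st with hm'
  refine ⟨updX β m' (some 1), updX β m' (some 0),
    ⟨updX_lt (le_max_right _ _), lt_updX (le_max_right _ _)⟩, ?_⟩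
  rintro γ ⟨hu', hv'⟩
  have hu := lt_iff_xlt.1 hu'
  have hv := lt_iff_xlt.1 hv' 
  -- claim: γ agrees with β below m'
  have hagree : ∀ i < m', γ.1 i = β.1 i := by
    by_contra hc
    push_neg at hc
    have hne : {i | γ.1 i ≠ β.1 i}.Nonempty := by
      obtain ⟨i, _, hi2⟩ := hc; exact ⟨i, hi2⟩
    set i0 := sInf {i | γ.1 i ≠ β.1 i} with hi0def
    have hmem : γ.1 i0 ≠ β.1 i0 := Nat.sInf_mem hne
    have hpre : ∀ k < i0, γ.1 k = β.1 k := by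
      intro k hk
      by_contra hk'
      exact absurd hk (not_lt.2 (Nat.sInf_le hk'))
    have hi0m' : i0 < m' := by
      obtain ⟨i, hi1, hi2⟩ := hc
      calc i0 ≤ i := Nat.sInf_le hi2
        _ < m' := hi1
    -- analyze u < γ
    obtain ⟨i1, hpre1, hlt1⟩ := hu
    have hu_eq : ∀ k, k ≠ m' → (updX β m' (some 1)).1 k = β.1 k := by
      intro k hk; simp [updX, hk]
    have hi1_le : i1 ≤ i0 := by
      by_contra h'
      push_neg at h'
      have := hpre1 i0 h'
      rw [hu_eq i0 (by omega)] at this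
      exact hmem this.symm
    have hi1_eq : i1 = i0 := by
      rcases eq_or_lt_of_le hi1_le with h' | h'
      · exact h'
      · exfalso
        rw [hu_eq i1 (by omega), hpre i1 h'] at hlt1
        exact lt_irrefl _ hlt1
    rw [hi1_eq, hu_eq i0 (by omega)] at hlt1
    -- analyze γ < v
    obtain ⟨i2, hpre2, hlt2⟩ := hv
    have hv_eq : ∀ k, k ≠ m' → (updX β m' (some 0)).1 k = β.1 k := by
      intro k hk; simp [updX, hk]
    have hi2_le : i2 ≤ i0 := by
      by_contra h'
      push_neg at h'
      have := hpre2 i0 h'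
      rw [hv_eq i0 (by omega)] at this
      exact hmem this
    have hi2_eq : i2 = i0 := by
      rcases eq_or_lt_of_le hi2_le with h' | h'
      · exact h'
      · exfalso
        rw [hv_eq i2 (by omega), hpre i2 h'] at hlt2
        exact lt_irrefl _ hlt2
    rw [hi2_eq, hv_eq i0 (by omega)] at hlt2
    exact lt_irrefl _ (hlt1.trans hlt2)
  intro i hi
  rw [hagree i (lt_of_lt_of_le hi (le_max_left _ _))]
  exact hβ i hi

lemma cyl_mem_nhds (m : ℕ) (α : XS) : cyl m α ∈ nhds α :=
  (isOpen_cyl m α).mem_nhds (self_mem_cyl m α)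

lemma exists_cyl_subset {S : Set XS} {α : XS} (h : S ∈ nhds α) :
    ∃ m, cyl m α ⊆ S := by
  rw [mem_nhds_iff_exists_Ioo_subset] at h
  obtain ⟨u, v, ⟨hu, hv⟩, hS⟩ := h
  obtain ⟨i1, hpre1, hlt1⟩ := lt_iff_xlt.1 hu
  obtain ⟨i2, hpre2, hlt2⟩ := lt_iff_xlt.1 hv
  refine ⟨max (i1 + 1) (i2 + 1), fun γ hγ => hS ⟨?_, ?_⟩⟩
  · rw [lt_iff_xlt]
    refine ⟨i1, fun k hk => (hpre1 k hk).trans (hγ k (by omega)).symm, ?_⟩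
    rw [hγ i1 (by omega)]
    exact hlt1
  · rw [lt_iff_xlt]
    refine ⟨i2, fun k hk => (hγ k (by omega)).trans (hpre2 k hk), ?_⟩
    rw [hγ i2 (by omega)]
    exact hlt2

lemma mem_punctured_iff {S : Set XS} {α : XS} :
    S ∈ nhdsWithin α {α}ᶜ ↔ ∃ m, cyl m α ∩ {α}ᶜ ⊆ S := by
  constructor
  · intro h
    rw [mem_nhdsWithin] at h
    obtain ⟨u, hu_open, hαu, hsub⟩ := h
    obtain ⟨m, hm⟩ := exists_cyl_subset (hu_open.mem_nhds hαu)
    exact ⟨m, fun β hβ => hsub ⟨hm hβ.1, hβ.2⟩⟩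
  · rintro ⟨m, hm⟩
    rw [mem_nhdsWithin]
    exact ⟨cyl m α, isOpen_cyl m α, self_mem_cyl m α, hm⟩

end XS
end KSFusion
namespace KSFusion
open XS

/-- Interleaving function. -/
def itl (α β : XS) (n : ℕ) : Option (ℕ ⊕ ℕ) :=
  if n % 2 = 0 then (α.1 (n / 2)).map Sum.inl else (β.1 (n / 2)).map Sum.inr

/-- Merged segment: letters of the interleaving in positions `[a, b)`. -/
def mseg (α β : XS) (a b : ℕ) : List (ℕ ⊕ ℕ) := (List.range' a (b - a)).filterMap (itl α β)

/-- The merge of two sequences: strip the zeros of the interleaving. -/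
noncomputable def mrg (α β : XS) : List (ℕ ⊕ ℕ) := mseg α β 0 (2 * max α.st β.st)

lemma mseg_split (α β : XS) {a b c : ℕ} (h1 : a ≤ b) (h2 : b ≤ c) :
    mseg α β a c = mseg α β a b ++ mseg α β b c := by
  have h4 := List.range'_append (s := a) (m := b - a) (n := c - b) (step := 1)
  have h5 : a + 1 * (b - a) = b := by omega
  rw [h5] at h4
  rw [mseg, mseg, mseg, ← List.filterMap_append]
  congr 1
  rw [h4]
  congr 1
  omega

lemma mseg_congr {α β α' β' : XS} {a b : ℕ}
    (h : ∀ n, a ≤ n → n < b → itl α β n = itl α' β' n) :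
    mseg α β a b = mseg α' β' a b := by
  apply List.filterMap_congr
  intro n hn
  rw [List.mem_range'_1] at hn
  exact h n hn.1 (by omega)

lemma mseg_none {α β : XS} {a b : ℕ}
    (h : ∀ n, a ≤ n → n < b → itl α β n = none) : mseg α β a b = [] := by
  rw [mseg, List.filterMap_eq_nil_iff]
  intro n hn
  rw [List.mem_range'_1] at hn
  exact h n hn.1 (by omega)

lemma itl_none_of_ge {α β : XS} {n : ℕ} (hm : 2 * max α.st β.st ≤ n) :
    itl α β n = none := by
  have hα : α.st ≤ n / 2 := by
    rw [Nat.le_div_iff_mul_le (by norm_num)]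
    have := le_max_left α.st β.st
    omega
  have hβ : β.st ≤ n / 2 := by
    rw [Nat.le_div_iff_mul_le (by norm_num)]
    have := le_max_right α.st β.st
    omega
  rw [itl]
  by_cases h : n % 2 = 0
  · rw [if_pos h, st_spec α (n / 2) hα]
    rfl
  · rw [if_neg h, st_spec β (n / 2) hβ]
    rfl

lemma mrg_eq {α β : XS} {N : ℕ} (h : 2 * max α.st β.st ≤ N) :
    mseg α β 0 N = mrg α β := by
  rw [mrg, mseg_split α β (Nat.zero_le _) h]
  rw [mseg_none (fun n hn1 hn2 => itl_none_of_ge hn1), List.append_nil]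

lemma itl_even (α β : XS) (i : ℕ) : itl α β (2 * i) = (α.1 i).map Sum.inl := by
  rw [itl, if_pos (by omega), Nat.mul_div_cancel_left i (by norm_num)]

lemma itl_odd (α β : XS) (i : ℕ) : itl α β (2 * i + 1) = (β.1 i).map Sum.inr := by
  rw [itl, if_neg (by omega)]
  have h : (2 * i + 1) / 2 = i := by omega
  rw [h]

lemma mseg_pair (α β : XS) (i : ℕ) :
    mseg α β (2 * i) (2 * i + 2) =
      ((α.1 i).map Sum.inl).toList ++ ((β.1 i).map Sum.inr).toList := by
  have h : (2 * i + 2) - (2 * i) = 2 := by omega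
  rw [mseg, h]
  have h2 : List.range' (2 * i) 2 = [2 * i, 2 * i + 1] := by
    rw [List.range'_succ]
    rw [List.range'_succ]
    rfl
  rw [h2]
  simp only [List.filterMap_cons, List.filterMap_nil]
  rw [itl_even, itl_odd]
  cases α.1 i <;> cases β.1 i <;> simp

lemma mseg_even {α β : XS} {m : ℕ} (hβ : ∀ i, m ≤ i → β.1 i = none) (k : ℕ) :
    mseg α β (2 * m) (2 * m + 2 * k) = ((List.range' m k).filterMap α.1).map Sum.inl := by
  induction k with
  | zero => rw [mseg]; simp
  | succ k ih =>
    have h1 : mseg α β (2 * m) (2 * m + 2 * (k + 1)) =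
        mseg α β (2 * m) (2 * m + 2 * k) ++ mseg α β (2 * (m + k)) (2 * (m + k) + 2) := by
      have := mseg_split α β (a := 2 * m) (b := 2 * m + 2 * k) (c := 2 * m + 2 * (k + 1))
        (by omega) (by omega)
      rw [this]
      congr 2 <;> omega
    rw [h1, ih, mseg_pair]
    rw [hβ (m + k) (by omega)]
    have h2 : List.range' m (k + 1) = List.range' m k ++ [m + k] := by
      rw [List.range'_concat]
      simp
    rw [h2]
    simp only [List.filterMap_append, List.map_append, List.filterMap_cons, List.filterMap_nil]
    cases α.1 (m + k) <;> simp

lemma mseg_odd {α β : XS} {m : ℕ} (hα : ∀ i, m ≤ i → α.1 i = none) (k : ℕ) :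
    mseg α β (2 * m) (2 * m + 2 * k) = ((List.range' m k).filterMap β.1).map Sum.inr := by
  induction k with
  | zero => rw [mseg]; simp
  | succ k ih =>
    have h1 : mseg α β (2 * m) (2 * m + 2 * (k + 1)) =
        mseg α β (2 * m) (2 * m + 2 * k) ++ mseg α β (2 * (m + k)) (2 * (m + k) + 2) := by
      have := mseg_split α β (a := 2 * m) (b := 2 * m + 2 * k) (c := 2 * m + 2 * (k + 1))
        (by omega) (by omega)
      rw [this]
      congr 2 <;> omega
    rw [h1, ih, mseg_pair]
    rw [hα (m + k) (by omega)]
    have h2 : List.range' m (k + 1) = List.range' m k ++ [m + k] := by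
      rw [List.range'_concat]
      simp
    rw [h2]
    simp only [List.filterMap_append, List.map_append, List.filterMap_cons, List.filterMap_nil]
    cases β.1 (m + k) <;> simp

/-- Horizontal extension lemma. -/
lemma mrg_extend1 {α α' β : XS} {m : ℕ} (h1 : α.st ≤ m) (h2 : β.st ≤ m)
    (h3 : ∀ i < m, α'.1 i = α.1 i) :
    mrg α' β = mrg α β ++
      ((List.range' m (max m α'.st - m)).filterMap α'.1).map Sum.inl := by
  set K := max m α'.st with hK
  have hmK : m ≤ K := le_max_left _ _
  have e1 : mrg α' β = mseg α' β 0 (2 * K) := by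
    rw [mrg_eq]
    have : α'.st ≤ K := le_max_right _ _
    have : β.st ≤ K := le_trans h2 hmK
    omega
  rw [e1, mseg_split α' β (Nat.zero_le _) (by omega : 2 * m ≤ 2 * K)]
  congr 1
  · rw [mseg_congr (α' := α) (β' := β) ?_, mrg_eq (by omega)]
    intro n hn1 hn2
    rw [itl, itl]
    by_cases h : n % 2 = 0
    · rw [if_pos h, if_pos h, h3 (n / 2) (by
        rw [Nat.div_lt_iff_lt_mul (by norm_num)]; omega)]
    · rw [if_neg h, if_neg h]
  · have h4 : 2 * K = 2 * m + 2 * (K - m) := by omega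
    rw [h4]
    exact mseg_even (fun i hi => st_spec β i (le_trans h2 hi)) (K - m)

/-- Vertical extension lemma. -/
lemma mrg_extend2 {α β β' : XS} {m : ℕ} (h1 : α.st ≤ m) (h2 : β.st ≤ m)
    (h3 : ∀ i < m, β'.1 i = β.1 i) :
    mrg α β' = mrg α β ++
      ((List.range' m (max m β'.st - m)).filterMap β'.1).map Sum.inr := by
  set K := max m β'.st with hK
  have hmK : m ≤ K := le_max_left _ _
  have e1 : mrg α β' = mseg α β' 0 (2 * K) := by
    rw [mrg_eq]
    have : β'.st ≤ K := le_max_right _ _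
    have : α.st ≤ K := le_trans h1 hmK
    omega
  rw [e1, mseg_split α β' (Nat.zero_le _) (by omega : 2 * m ≤ 2 * K)]
  congr 1
  · rw [mseg_congr (α' := α) (β' := β) ?_, mrg_eq (by omega)]
    intro n hn1 hn2
    rw [itl, itl]
    by_cases h : n % 2 = 0
    · rw [if_pos h, if_pos h]
    · rw [if_neg h, if_neg h, h3 (n / 2) (by
        rw [Nat.div_lt_iff_lt_mul (by norm_num)]; omega)]
  · have h4 : 2 * K = 2 * m + 2 * (K - m) := by omega
    rw [h4]
    exact mseg_odd (fun i hi => st_spec α i (le_trans h1 hi)) (K - m)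

/-- The tail word is nonempty for a proper cylinder-mate. -/
lemma tail_ne {α α' : XS} {m : ℕ} (h1 : α.st ≤ m)
    (h3 : ∀ i < m, α'.1 i = α.1 i) (hne : α' ≠ α) :
    (List.range' m (max m α'.st - m)).filterMap α'.1 ≠ [] := by
  have : ∃ i, α'.1 i ≠ α.1 i := by
    by_contra h'
    push_neg at h'
    exact hne (ext' h')
  obtain ⟨i, hi⟩ := this
  have him : m ≤ i := by
    by_contra h'
    exact hi (h3 i (by omega))
  have hαnone : α.1 i = none := st_spec α i (le_trans h1 him)
  rw [hαnone] at hi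
  obtain ⟨a, ha⟩ := Option.ne_none_iff_exists'.1 hi
  have hist : i < α'.st := lt_st (by rw [ha]; simp)
  apply List.ne_nil_of_mem (a := a)
  rw [List.mem_filterMap]
  exact ⟨i, List.mem_range'_1.2 ⟨him, by omega⟩, ha⟩

/-- Extend a sequence by an explicit word at position `m`. -/
def extX (α : XS) (m : ℕ) (w : List ℕ) : XS :=
  ⟨fun i => if i < m then α.1 i else
      if h : i - m < w.length then some (w.get ⟨i - m, h⟩) else none, by
    refine ⟨m + w.length, fun k hk => ?_⟩
    show (if k < m then α.1 k else _) = none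
    rw [if_neg (by omega), dif_neg (by omega)]⟩

lemma extX_agree (α : XS) (m : ℕ) (w : List ℕ) : ∀ i < m, (extX α m w).1 i = α.1 i := by
  intro i hi
  show (if i < m then α.1 i else _) = α.1 i
  rw [if_pos hi]

lemma extX_at (α : XS) (m : ℕ) (w : List ℕ) (i : ℕ) (hi : i < w.length) :
    (extX α m w).1 (m + i) = some (w.get ⟨i, hi⟩) := by
  show (if m + i < m then α.1 (m + i) else _) = _
  rw [if_neg (by omega)]
  have h2 : m + i - m = i := by omega
  rw [dif_pos (by omega)]
  congr 1
  simp [h2]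

lemma extX_st {α : XS} {m : ℕ} {w : List ℕ} (hw : w ≠ []) :
    (extX α m w).st = m + w.length := by
  have hlen : 0 < w.length := List.length_pos_iff.2 hw
  apply le_antisymm
  · apply st_le
    intro k hk
    show (if k < m then α.1 k else _) = none
    rw [if_neg (by omega), dif_neg (by omega)]
  · have := extX_at α m w (w.length - 1) (by omega)
    have hlt := lt_st (α := extX α m w) (i := m + (w.length - 1)) (by rw [this]; simp)
    omega

lemma filterMap_range'_eq (g : ℕ → Option ℕ) :
    ∀ (w : List ℕ) (m : ℕ),
      (∀ i (hi : i < w.length), g (m + i) = some (w.get ⟨i, hi⟩)) →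
      (List.range' m w.length).filterMap g = w := by
  intro w
  induction w with
  | nil => intro m _; simp
  | cons a w ih =>
    intro m h
    have h0 : g m = some a := by
      have := h 0 (by simp)
      simpa using this
    simp only [List.length_cons, List.range'_succ, List.filterMap_cons, h0]
    congr 1
    apply ih
    intro i hi
    have := h (i + 1) (by simp; omega)
    have he : m + 1 + i = m + (i + 1) := by omega
    rw [he, this]
    simp

/-- Computation of the merge of an explicit extension. -/
lemma mrg_extX1 {α β : XS} {m : ℕ} (h1 : α.st ≤ m) (h2 : β.st ≤ m)
    {w : List ℕ} (hw : w ≠ []) :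
    mrg (extX α m w) β = mrg α β ++ w.map Sum.inl := by
  rw [mrg_extend1 h1 h2 (extX_agree α m w)]
  congr 2
  have hst := extX_st (α := α) (m := m) hw
  have hK : max m (extX α m w).st = m + w.length := by rw [hst]; omega
  rw [hK]
  have h3 : m + w.length - m = w.length := by omega
  rw [h3]
  exact filterMap_range'_eq _ w m (fun i hi => extX_at α m w i hi)

lemma mrg_extX2 {α β : XS} {m : ℕ} (h1 : α.st ≤ m) (h2 : β.st ≤ m)
    {w : List ℕ} (hw : w ≠ []) :
    mrg α (extX β m w) = mrg α β ++ w.map Sum.inr := by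
  rw [mrg_extend2 h1 h2 (extX_agree β m w)]
  congr 2
  have hst := extX_st (α := β) (m := m) hw
  have hK : max m (extX β m w).st = m + w.length := by rw [hst]; omega
  rw [hK]
  have h3 : m + w.length - m = w.length := by omega
  rw [h3]
  exact filterMap_range'_eq _ w m (fun i hi => extX_at β m w i hi)

lemma extX_ne {α : XS} {m : ℕ} {w : List ℕ} (h1 : α.st ≤ m) (hw : w ≠ []) :
    extX α m w ≠ α := by
  intro h
  have hlen : 0 < w.length := List.length_pos_iff.2 hw
  have h2 := extX_at α m w 0 (by omega)
  rw [h] at h2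
  have h3 : α.1 (m + 0) = none := st_spec α _ (by omega)
  rw [h3] at h2
  exact nomatch h2

end KSFusion
namespace KSFusion
open XS

noncomputable def eIso : ℚ ≃o XS :=
  (Order.iso_of_countable_dense ℚ XS).some

lemma eIso_inj : Function.Injective (eIso : ℚ → XS) := eIso.injective

lemma map_eIso_nhds (x : ℚ) : Filter.map eIso (nhds x) = nhds (eIso x) :=
  eIso.toHomeomorph.map_nhds_eq x

lemma map_eIso_punctured (x : ℚ) :
    Filter.map eIso (nhdsWithin x {x}ᶜ) = nhdsWithin (eIso x) {eIso x}ᶜ := by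
  rw [nhdsWithin, nhdsWithin, Filter.map_inf eIso_inj, map_eIso_nhds, Filter.map_principal]
  congr 1
  rw [Set.image_compl_eq eIso.bijective, Set.image_singleton]

lemma punctured_pull {x : ℚ} {S : Set XS} :
    S ∈ nhdsWithin (eIso x) {eIso x}ᶜ ↔ eIso ⁻¹' S ∈ nhdsWithin x {x}ᶜ := by
  rw [← map_eIso_punctured, Filter.mem_map]

/-- The punctured-neighborhood frame on `ℚ`. -/
noncomputable def tauQ : ℚ → Filter ℚ := fun x => nhdsWithin x {x}ᶜ

/-- The merge map from the rational plane to the tree. -/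
noncomputable def fQ (p : ℚ × ℚ) : TW := mrg (eIso p.1) (eIso p.2)

lemma mem_prodTau1 {U : Set (ℚ × ℚ)} {p : ℚ × ℚ} :
    U ∈ prodTau1 tauQ p ↔ {a : ℚ | (a, p.2) ∈ U} ∈ tauQ p.1 := Iff.rfl

lemma mem_prodTau2 {U : Set (ℚ × ℚ)} {p : ℚ × ℚ} :
    U ∈ prodTau2 tauQ p ↔ {b : ℚ | (p.1, b) ∈ U} ∈ tauQ p.2 := Iff.rfl

lemma cond1_sub {x y : ℚ} {U : Set (ℚ × ℚ)}
    (hU : U ∈ prodTau1 tauQ (x, y)) {v : TW} (hv : TR1 (fQ (x, y)) v) :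
    v ∈ fQ '' U := by
  obtain ⟨w, hw, rfl⟩ := hv
  have hT : {a : ℚ | (a, y) ∈ U} ∈ tauQ x := mem_prodTau1.1 hU
  have hS : eIso '' {a : ℚ | (a, y) ∈ U} ∈ nhdsWithin (eIso x) {eIso x}ᶜ := by
    rw [punctured_pull, Set.preimage_image_eq _ eIso_inj]
    exact hT
  obtain ⟨m, hm⟩ := mem_punctured_iff.1 hS
  set m' := max m (max (eIso x).st (eIso y).st) with hm'def
  have hsx : (eIso x).st ≤ m' := by omega
  have hsy : (eIso y).st ≤ m' := by omega
  set α' := extX (eIso x) m' w with hα'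
  have hcyl : α' ∈ cyl m (eIso x) := fun i hi => extX_agree _ _ _ i (by omega)
  have hne : α' ≠ eIso x := extX_ne hsx hw
  have hmem : α' ∈ eIso '' {a : ℚ | (a, y) ∈ U} := hm ⟨hcyl, hne⟩
  obtain ⟨x', hx', hex⟩ := hmem
  refine ⟨(x', y), hx', ?_⟩
  show mrg (eIso x') (eIso y) = mrg (eIso x) (eIso y) ++ w.map Sum.inl
  rw [hex]
  exact mrg_extX1 hsx hsy hw

lemma cond1_ex (x y : ℚ) :
    ∃ U ∈ prodTau1 tauQ (x, y), ∀ q ∈ U, TR1 (fQ (x, y)) (fQ q) := by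
  set m := max (eIso x).st (eIso y).st with hmdef
  set C := cyl m (eIso x) ∩ {eIso x}ᶜ with hCdef
  refine ⟨{q : ℚ × ℚ | q.1 ∈ eIso ⁻¹' C ∧ q.2 = y}, ?_, ?_⟩
  · rw [mem_prodTau1]
    have : {a : ℚ | a ∈ eIso ⁻¹' C ∧ y = y} = eIso ⁻¹' C := by
      ext a; simp
    show {a : ℚ | a ∈ eIso ⁻¹' C ∧ y = y} ∈ nhdsWithin x {x}ᶜ
    rw [this, ← punctured_pull]
    exact mem_punctured_iff.2 ⟨m, le_refl _⟩
  · rintro ⟨x', y'⟩ ⟨hx', hy'⟩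
    rw [show ((x', y') : ℚ × ℚ) = (x', y) from by simp at hy'; rw [hy']]
    have hcyl : ∀ i < m, (eIso x').1 i = (eIso x).1 i := hx'.1
    have hne : eIso x' ≠ eIso x := hx'.2
    have h1 : (eIso x).st ≤ m := le_max_left _ _
    have h2 : (eIso y).st ≤ m := le_max_right _ _
    refine ⟨(List.range' m (max m (eIso x').st - m)).filterMap (eIso x').1,
      tail_ne h1 hcyl hne, ?_⟩
    exact mrg_extend1 h1 h2 hcyl

lemma cond2_sub {x y : ℚ} {U : Set (ℚ × ℚ)}
    (hU : U ∈ prodTau2 tauQ (x, y)) {v : TW} (hv : TR2 (fQ (x, y)) v) :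
    v ∈ fQ '' U := by
  obtain ⟨w, hw, rfl⟩ := hv
  have hT : {b : ℚ | (x, b) ∈ U} ∈ tauQ y := mem_prodTau2.1 hU
  have hS : eIso '' {b : ℚ | (x, b) ∈ U} ∈ nhdsWithin (eIso y) {eIso y}ᶜ := by
    rw [punctured_pull, Set.preimage_image_eq _ eIso_inj]
    exact hT
  obtain ⟨m, hm⟩ := mem_punctured_iff.1 hS
  set m' := max m (max (eIso x).st (eIso y).st) with hm'def
  have hsx : (eIso x).st ≤ m' := by omega
  have hsy : (eIso y).st ≤ m' := by omega
  set β' := extX (eIso y) m' w with hβ'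
  have hcyl : β' ∈ cyl m (eIso y) := fun i hi => extX_agree _ _ _ i (by omega)
  have hne : β' ≠ eIso y := extX_ne hsy hw
  have hmem : β' ∈ eIso '' {b : ℚ | (x, b) ∈ U} := hm ⟨hcyl, hne⟩
  obtain ⟨y', hy', hey⟩ := hmem
  refine ⟨(x, y'), hy', ?_⟩
  show mrg (eIso x) (eIso y') = mrg (eIso x) (eIso y) ++ w.map Sum.inr
  rw [hey]
  exact mrg_extX2 hsx hsy hw

lemma cond2_ex (x y : ℚ) :
    ∃ U ∈ prodTau2 tauQ (x, y), ∀ q ∈ U, TR2 (fQ (x, y)) (fQ q) := by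
  set m := max (eIso x).st (eIso y).st with hmdef
  set C := cyl m (eIso y) ∩ {eIso y}ᶜ with hCdef
  refine ⟨{q : ℚ × ℚ | q.2 ∈ eIso ⁻¹' C ∧ q.1 = x}, ?_, ?_⟩
  · rw [mem_prodTau2]
    have : {b : ℚ | b ∈ eIso ⁻¹' C ∧ x = x} = eIso ⁻¹' C := by
      ext b; simp
    show {b : ℚ | b ∈ eIso ⁻¹' C ∧ x = x} ∈ nhdsWithin y {y}ᶜ
    rw [this, ← punctured_pull]
    exact mem_punctured_iff.2 ⟨m, le_refl _⟩
  · rintro ⟨x', y'⟩ ⟨hy', hx'⟩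
    rw [show ((x', y') : ℚ × ℚ) = (x, y') from by simp at hx'; rw [hx']]
    have hcyl : ∀ i < m, (eIso y').1 i = (eIso y).1 i := hy'.1
    have hne : eIso y' ≠ eIso y := hy'.2
    have h1 : (eIso x).st ≤ m := le_max_left _ _
    have h2 : (eIso y).st ≤ m := le_max_right _ _
    refine ⟨(List.range' m (max m (eIso y').st - m)).filterMap (eIso y').1,
      tail_ne h2 hcyl hne, ?_⟩
    exact mrg_extend2 h1 h2 hcyl

/-- Truth transfer from the tree Kripke model to the product neighborhood model. -/
lemma transfer (V : ℕ → Set TW) :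
    ∀ (φ : MFormula 2) (p : ℚ × ℚ),
      nSat ![prodTau1 tauQ, prodTau2 tauQ] (fun n => fQ ⁻¹' (V n)) p φ ↔
        kSat TRf V (fQ p) φ := by
  intro φ
  induction φ with
  | prop n => intro p; exact Iff.rfl
  | bot => intro p; exact Iff.rfl
  | imp φ ψ ihφ ihψ =>
    intro p
    show (nSat _ _ p φ → nSat _ _ p ψ) ↔ (kSat _ _ _ φ → kSat _ _ _ ψ)
    rw [ihφ, ihψ]
  | box i φ ih =>
    intro p
    fin_cases i
    · show {q | nSat _ _ q φ} ∈ (![prodTau1 tauQ, prodTau2 tauQ] :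
          Fin 2 → (ℚ × ℚ) → Filter (ℚ × ℚ)) 0 p ↔ ∀ v, TRf 0 (fQ p) v → kSat TRf V v φ
      rw [show (![prodTau1 tauQ, prodTau2 tauQ] :
          Fin 2 → (ℚ × ℚ) → Filter (ℚ × ℚ)) 0 = prodTau1 tauQ from rfl]
      constructor
      · intro hmem v hv
        have hv' : TR1 (fQ p) v := hv
        have := cond1_sub (x := p.1) (y := p.2) (U := {q | nSat _ _ q φ})
          (by rw [Prod.mk.eta]; exact hmem) (by rw [Prod.mk.eta]; exact hv')
        obtain ⟨q, hq, rfl⟩ := this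
        exact (ih q).1 hq
      · intro h
        obtain ⟨U, hU, hU2⟩ := cond1_ex p.1 p.2
        rw [Prod.mk.eta] at hU hU2
        refine Filter.mem_of_superset hU ?_
        intro q hq
        exact (ih q).2 (h _ (hU2 q hq))
    · show {q | nSat _ _ q φ} ∈ (![prodTau1 tauQ, prodTau2 tauQ] :
          Fin 2 → (ℚ × ℚ) → Filter (ℚ × ℚ)) 1 p ↔ ∀ v, TRf 1 (fQ p) v → kSat TRf V v φ
      rw [show (![prodTau1 tauQ, prodTau2 tauQ] :
          Fin 2 → (ℚ × ℚ) → Filter (ℚ × ℚ)) 1 = prodTau2 tauQ from rfl]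
      constructor
      · intro hmem v hv
        have hv' : TR2 (fQ p) v := hv
        have := cond2_sub (x := p.1) (y := p.2) (U := {q | nSat _ _ q φ})
          (by rw [Prod.mk.eta]; exact hmem) (by rw [Prod.mk.eta]; exact hv')
        obtain ⟨q, hq, rfl⟩ := this
        exact (ih q).1 hq
      · intro h
        obtain ⟨U, hU, hU2⟩ := cond2_ex p.1 p.2
        rw [Prod.mk.eta] at hU hU2
        refine Filter.mem_of_superset hU ?_
        intro q hq
        exact (ih q).2 (h _ (hU2 q hq))

end KSFusion
namespace KSFusion
open MFormula

lemma nSat_subst {n : ℕ} {X : Type} (τ : Fin n → X → Filter X) (V : ℕ → Set X)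
    (s : ℕ → MFormula n) :
    ∀ (φ : MFormula n) (x : X),
      nSat τ V x (φ.subst s) ↔ nSat τ (fun p => {y | nSat τ V y (s p)}) x φ := by
  intro φ
  induction φ with
  | prop p => intro x; exact Iff.rfl
  | bot => intro x; exact Iff.rfl
  | imp φ ψ ihφ ihψ =>
    intro x
    show (nSat _ _ x _ → nSat _ _ x _) ↔ (nSat _ _ x _ → nSat _ _ x _)
    rw [ihφ, ihψ]
  | box i φ ih =>
    intro x
    show {y | nSat τ V y (φ.subst s)} ∈ τ i x ↔
      {y | nSat τ (fun p => {y | nSat τ V y (s p)}) y φ} ∈ τ i x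
    have h : {y | nSat τ V y (φ.subst s)} =
        {y | nSat τ (fun p => {y | nSat τ V y (s p)}) y φ} := Set.ext fun y => ih y
    rw [h]

lemma isNormal_NLogn {n : ℕ} {X : Type} [Nonempty X] (τ : Fin n → X → Filter X) :
    IsNormalLogic (NLogn τ) where
  taut := fun φ h V x => h (fun ψ => nSat τ V x ψ) (fun hb => hb) (fun _ _ => Iff.rfl)
  kax := fun i p q V x => by
    show {y | nSat τ V y (p.imp q)} ∈ τ i x → {y | nSat τ V y p} ∈ τ i x →
      {y | nSat τ V y q} ∈ τ i x
    intro h1 h2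
    refine Filter.mem_of_superset (Filter.inter_mem h1 h2) ?_
    rintro y ⟨hy1, hy2⟩
    exact hy1 hy2
  mp := fun φ ψ h1 h2 V x => (h1 V x) (h2 V x)
  subst := fun φ s h V x => (nSat_subst τ V s φ x).2 (h _ x)
  nec := fun i φ h V x => Filter.univ_mem' (fun y => h V y)

lemma dAx_valid : dAx ∈ NLog tauQ := by
  intro V x
  intro h1 h2
  have h1' : V 0 ∈ nhdsWithin x {x}ᶜ := h1
  have h2' : {y : ℚ | y ∈ V 0 → False} ∈ nhdsWithin x {x}ᶜ := h2
  obtain ⟨y, hy1, hy2⟩ := Filter.nonempty_of_mem (Filter.inter_mem h1' h2')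
  exact hy2 hy1

lemma fourAx_valid : fourAx ∈ NLog tauQ := by
  intro V x
  intro h1
  have h1' : V 0 ∈ nhdsWithin x {x}ᶜ := h1
  rw [mem_nhdsWithin] at h1'
  obtain ⟨O, hO, hxO, hsub⟩ := h1'
  show {y : ℚ | {z : ℚ | z ∈ V 0} ∈ nhdsWithin y {y}ᶜ} ∈ nhdsWithin x {x}ᶜ
  rw [mem_nhdsWithin]
  refine ⟨O, hO, hxO, ?_⟩
  rintro y ⟨hyO, hyx⟩
  show {z : ℚ | z ∈ V 0} ∈ nhdsWithin y {y}ᶜ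
  rw [mem_nhdsWithin]
  refine ⟨O ∩ {x}ᶜ, hO.inter isOpen_compl_singleton, ⟨hyO, hyx⟩, ?_⟩
  rintro z ⟨⟨hzO, hzx⟩, _⟩
  exact hsub ⟨hzO, hzx⟩

lemma logicD4_subset_NLog : LogicD4 ⊆ NLog tauQ := by
  have hK : LogicK ⊆ NLog tauQ :=
    normalClosure_min (isNormal_NLogn _) (Set.empty_subset _)
  have hDs : LogicD ⊆ NLog tauQ := by
    apply normalClosure_min (isNormal_NLogn _)
    apply Set.union_subset hK
    intro φ hφ
    rw [Set.mem_singleton_iff] at hφ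
    subst hφ
    exact dAx_valid
  apply normalClosure_min (isNormal_NLogn _)
  apply Set.union_subset hDs
  intro φ hφ
  rw [Set.mem_singleton_iff] at hφ
  subst hφ
  exact fourAx_valid

lemma nSat_trTo0 (V : ℕ → Set (ℚ × ℚ)) :
    ∀ (φ : MFormula 1) (x y : ℚ),
      nSat ![prodTau1 tauQ, prodTau2 tauQ] V (x, y) (trTo 0 φ) ↔
        nSat (fun _ : Fin 1 => tauQ) (fun p => {a : ℚ | (a, y) ∈ V p}) x φ := by
  intro φ
  induction φ with
  | prop p => intro x y; exact Iff.rfl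
  | bot => intro x y; exact Iff.rfl
  | imp φ ψ ihφ ihψ =>
    intro x y
    show (nSat _ _ _ _ → nSat _ _ _ _) ↔ (nSat _ _ _ _ → nSat _ _ _ _)
    rw [ihφ, ihψ]
  | box i φ ih =>
    intro x y
    show {q | nSat _ V q (trTo 0 φ)} ∈ prodTau1 tauQ (x, y) ↔
      {a : ℚ | nSat _ _ a φ} ∈ tauQ x
    rw [mem_prodTau1]
    have h : {a : ℚ | ((a, y) : ℚ × ℚ) ∈ {q | nSat _ V q (trTo 0 φ)}} =
        {a : ℚ | nSat (fun _ : Fin 1 => tauQ) (fun p => {a : ℚ | (a, y) ∈ V p}) a φ} :=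
      Set.ext fun a => ih a y
    exact h ▸ Iff.rfl

lemma nSat_trTo1 (V : ℕ → Set (ℚ × ℚ)) :
    ∀ (φ : MFormula 1) (x y : ℚ),
      nSat ![prodTau1 tauQ, prodTau2 tauQ] V (x, y) (trTo 1 φ) ↔
        nSat (fun _ : Fin 1 => tauQ) (fun p => {b : ℚ | (x, b) ∈ V p}) y φ := by
  intro φ
  induction φ with
  | prop p => intro x y; exact Iff.rfl
  | bot => intro x y; exact Iff.rfl
  | imp φ ψ ihφ ihψ =>
    intro x y
    show (nSat _ _ _ _ → nSat _ _ _ _) ↔ (nSat _ _ _ _ → nSat _ _ _ _)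
    rw [ihφ, ihψ]
  | box i φ ih =>
    intro x y
    show {q | nSat _ V q (trTo 1 φ)} ∈ prodTau2 tauQ (x, y) ↔
      {b : ℚ | nSat _ _ b φ} ∈ tauQ y
    rw [mem_prodTau2]
    have h : {b : ℚ | ((x, b) : ℚ × ℚ) ∈ {q | nSat _ V q (trTo 1 φ)}} =
        {b : ℚ | nSat (fun _ : Fin 1 => tauQ) (fun p => {b : ℚ | (x, b) ∈ V p}) b φ} :=
      Set.ext fun b => ih x b
    exact h ▸ Iff.rfl

lemma fusion_subset_NLog2 :
    Fusion LogicD4 LogicD4 ⊆ NLog2 (prodTau1 tauQ) (prodTau2 tauQ) := by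
  apply normalClosure_min (isNormal_NLogn _)
  apply Set.union_subset
  · rintro ψ ⟨φ, hφ, rfl⟩
    rintro V ⟨x, y⟩
    exact (nSat_trTo0 V φ x y).2 (logicD4_subset_NLog hφ _ x)
  · rintro ψ ⟨φ, hφ, rfl⟩
    rintro V ⟨x, y⟩
    exact (nSat_trTo1 V φ x y).2 (logicD4_subset_NLog hφ _ y)

-- ===== syntactic facts about the fusion =====

def ΓF : Set (MFormula 2) := trTo 0 '' LogicD4 ∪ trTo 1 '' LogicD4

lemma fusion_eq_prov : Fusion LogicD4 LogicD4 = {φ | Prov ΓF φ} :=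
  normalClosure_eq_prov

lemma dAx_mem_LogicD4 : dAx ∈ LogicD4 :=
  mem_normalClosure_self (Set.mem_union_left _
    (mem_normalClosure_self (Set.mem_union_right _ rfl)))

lemma fourAx_mem_LogicD4 : fourAx ∈ LogicD4 :=
  mem_normalClosure_self (Set.mem_union_right _ rfl)

lemma trdAx_prov : ∀ i : Fin 2, Prov ΓF (trTo i dAx) := by
  intro i
  fin_cases i
  · exact Prov.ax (Or.inl ⟨dAx, dAx_mem_LogicD4, rfl⟩)
  · exact Prov.ax (Or.inr ⟨dAx, dAx_mem_LogicD4, rfl⟩)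

lemma tr4Ax_prov : ∀ i : Fin 2, Prov ΓF (trTo i fourAx) := by
  intro i
  fin_cases i
  · exact Prov.ax (Or.inl ⟨fourAx, fourAx_mem_LogicD4, rfl⟩)
  · exact Prov.ax (Or.inr ⟨fourAx, fourAx_mem_LogicD4, rfl⟩)

lemma hD_F : ∀ i : Fin 2, Prov ΓF ((MFormula.box i (MFormula.bot)).neg) := by
  intro i
  have h2 := Prov.subst (s := fun _ => MFormula.bot) (trdAx_prov i)
  have h3 : (trTo i dAx).subst (fun _ => MFormula.bot) =
      (MFormula.box i MFormula.bot).imp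
        ((MFormula.box i (MFormula.bot.imp MFormula.bot)).imp MFormula.bot) := rfl
  rw [h3] at h2
  have h4 : Prov ΓF (MFormula.box i (MFormula.bot.imp MFormula.bot)) :=
    Prov.nec i (Prov.taut _ (fun v hb hi => (hi _ _).2 id))
  refine prov_mp2 h2 h4 ?_
  intro v hb hi
  simp only [MFormula.neg, hi]
  tauto

lemma h4_F : ∀ (i : Fin 2) (ψ : MFormula 2),
    Prov ΓF ((MFormula.box i ψ).imp (MFormula.box i (MFormula.box i ψ))) := by
  intro i ψ
  have h2 := Prov.subst (s := fun _ => ψ) (tr4Ax_prov i)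
  exact h2

lemma prov_imp_of_conj {n : ℕ} {Γ : Set (MFormula n)} {ψ : MFormula n} :
    ∀ (l : List (MFormula n)) (χ : MFormula n), (∀ χ' ∈ l, χ' = ψ) →
      Prov Γ (conjImp l χ) → Prov Γ (ψ.imp χ) := by
  intro l
  induction l with
  | nil =>
    intro χ _ hp
    apply prov_mp1 hp
    intro v hb hi
    simp only [hi]
    tauto
  | cons χ' l ih =>
    intro χ hl hp
    have hψ : χ' = ψ := hl χ' (by simp)
    rw [hψ] at hp
    have hp' : Prov Γ (conjImp l (ψ.imp χ)) := by
      apply prov_mp1 hp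
      intro v hb hi
      simp only [conjImp, hi, v_conjImp v hi]
      tauto
    have := ih (ψ.imp χ) (fun x hx => hl x (by simp [hx])) hp'
    apply prov_mp1 this
    intro v hb hi
    simp only [hi]
    tauto

lemma not_prov_con {n : ℕ} {Γ : Set (MFormula n)} {φ : MFormula n}
    (h : ¬ Prov Γ φ) : Con Γ {φ.neg} := by
  rintro ⟨l, hl, hp⟩
  have h1 : Prov Γ (φ.neg.imp MFormula.bot) :=
    prov_imp_of_conj l MFormula.bot (fun χ hχ => hl χ hχ) hp
  apply h
  apply prov_mp1 h1
  intro v hb hi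
  simp only [MFormula.neg, hi]
  tauto

/-- The zero sequence. -/
def zeroX : XS := ⟨fun _ => none, 0, fun _ _ => rfl⟩

lemma zeroX_st : zeroX.st = 0 :=
  Nat.le_zero.1 (XS.st_le (fun _ _ => rfl))

lemma mrg_zero : mrg zeroX zeroX = [] := by
  rw [mrg, zeroX_st]
  simp [mseg]

lemma fQ_zero : fQ (eIso.symm zeroX, eIso.symm zeroX) = [] := by
  show mrg (eIso (eIso.symm zeroX)) (eIso (eIso.symm zeroX)) = []
  rw [OrderIso.apply_symm_apply]
  exact mrg_zero

lemma nlog2_subset_fusion :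
    NLog2 (prodTau1 tauQ) (prodTau2 tauQ) ⊆ Fusion LogicD4 LogicD4 := by
  intro φ hφ
  rw [fusion_eq_prov]
  by_contra hnp
  obtain ⟨r, hr1, hr2⟩ := lindenbaum (not_prov_con hnp)
  obtain ⟨en, hen⟩ := exists_enum
  set root : World ΓF := ⟨r, hr2⟩ with hroot
  have htruth := tree_truth hD_F en root h4_F hen φ []
  have hφroot : φ ∉ r := hr2.not_mem_of_neg_mem (hr1 rfl)
  have hnk : ¬ kSat TRf (TV hD_F en root) [] φ := by
    intro hk
    exact hφroot (htruth.1 hk)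
  set p0 : ℚ × ℚ := (eIso.symm zeroX, eIso.symm zeroX) with hp0
  have hsat := hφ (fun m => fQ ⁻¹' (TV hD_F en root m)) p0
  have htr := (transfer (TV hD_F en root) φ p0).1 hsat
  rw [fQ_zero] at htr
  exact hnk htr

end KSFusion

/-- For `𝔛 = (ℚ, τ)` with `τ(x)` the punctured neighborhood filter of
`x` in the standard topology on `ℚ`: `Log(𝔛 × 𝔛) = D4 ⊗ D4`. -/
theorem log_rat_prod_eq_D4_fusion :
    NLog2 (prodTau1 (fun x : ℚ => nhdsWithin x {x}ᶜ))
      (prodTau2 (fun x : ℚ => nhdsWithin x {x}ᶜ))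
      = Fusion LogicD4 LogicD4 :=
  Set.Subset.antisymm KSFusion.nlog2_subset_fusion KSFusion.fusion_subset_NLog2
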